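/- For every complex number δ with |δ| ≤ 0.38, every positive integer n, and every complex number w with w² = ((2+δ)/(1+δ))·n²π², one has w ≠ 0, cosh w ≠ 0, and tanh w / w ≠ 1+δ. That is, the second compatibility condition tanh(√(((2+δ)/(1+δ))n²π²))/√(((2+δ)/(1+δ))n²π²) = 1+δ has no solution; consequently λ = −n²π²/(1+δ) is never an eigenvalue of the perturbed operator T_δ for |δ| ≤ 0.38. -/

import Mathlib

open Real

set_option maxHeartbeats 1000000

/-- For every complex `δ` with `|δ| ≤ 0.38`, every positive integer `n`, and every complex
`w` with `w² = ((2+δ)/(1+δ))·n²π²`, one has `w ≠ 0`, `cosh w ≠ 0`, and `tanh w / w ≠ 1+δ`: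
the second compatibility condition `tanh(√(((2+δ)/(1+δ))n²π²))/√(((2+δ)/(1+δ))n²π²) = 1+δ`
has no solution, so `λ = −n²π²/(1+δ)` is never an eigenvalue of the perturbed operator
`T_δ`. -/
theorem stmt_16 (δ : ℂ) (hδ : ‖δ‖ ≤ 0.38) (n : ℕ) (hn : 0 < n)
    (w : ℂ) (hw : w^2 = ((2 + δ) / (1 + δ)) * (n : ℂ)^2 * (π : ℂ)^2) :
    w ≠ 0 ∧ Complex.cosh w ≠ 0 ∧ Complex.tanh w / w ≠ 1 + δ := by
  set a := δ.re with ha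
  set b := δ.im with hb
  have habs2 : a * a + b * b ≤ 0.1444 := by
    have h1 : ‖δ‖^2 ≤ 0.38^2 := by
      nlinarith [norm_nonneg δ]
    rw [Complex.sq_norm, Complex.normSq_apply] at h1
    norm_num at h1 ⊢
    linarith
  have haN : Complex.normSq (1 + δ) = (1 + a) * (1 + a) + b * b := by
    simp [Complex.normSq_apply, ha, hb]
  have hNlb : Complex.normSq (1 + δ) ≥ 0.3844 := by
    rw [haN]; nlinarith [sq_nonneg (a + 0.38), sq_nonneg b]
  have hNub : Complex.normSq (1 + δ) ≤ 1.9044 := by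
    rw [haN]; nlinarith [sq_nonneg (a - 0.38)]
  have hNpos : 0 < Complex.normSq (1 + δ) := by linarith
  -- real part of (2+δ)/(1+δ)
  have hzre : ((2 + δ) / (1 + δ)).re ≥ 0.45 := by
    rw [Complex.div_re]
    have h2re : (2 + δ).re = 2 + a := by simp [ha]
    have h2im : (2 + δ).im = b := by simp [hb]
    have h1re : (1 + δ).re = 1 + a := by simp [ha]
    have h1im : (1 + δ).im = b := by simp [hb]
    rw [h2re, h2im, h1re, h1im, ← add_div, ge_iff_le, le_div_iff₀ hNpos]
    rw [haN]
    nlinarith [sq_nonneg (a + 0.38), sq_nonneg b]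
  -- real part of w^2
  have hpi : (3.14159 : ℝ) ≤ π := by linarith [Real.pi_gt_d6]
  have hn1 : (1 : ℝ) ≤ (n : ℝ) := by exact_mod_cast hn
  have hw2 : w ^ 2 = ((2 + δ) / (1 + δ)) * ((((n : ℝ)^2 * π^2 : ℝ)) : ℂ) := by
    rw [hw]; push_cast; ring
  have hwre : (w ^ 2).re = ((2 + δ) / (1 + δ)).re * ((n : ℝ)^2 * π^2) := by
    rw [hw2, Complex.mul_re, Complex.ofReal_re, Complex.ofReal_im, mul_zero, sub_zero]
  have hresq : (w ^ 2).re = w.re ^ 2 - w.im ^ 2 := by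
    rw [sq, Complex.mul_re]; ring
  set x := w.re with hx
  set y := w.im with hy
  have hx2 : x ^ 2 ≥ 4.41 := by
    have hpisq : π^2 ≥ 9.8 := by nlinarith
    have hnsq : (n : ℝ)^2 ≥ (1:ℝ) := by nlinarith
    have h1 : ((n : ℝ)^2 * π^2) ≥ 9.8 := by
      have := mul_le_mul hnsq hpisq (by norm_num : (0:ℝ) ≤ 9.8) (by positivity)
      linarith
    have h2 : (w ^ 2).re ≥ 0.45 * 9.8 := by
      rw [hwre]
      exact mul_le_mul hzre h1 (by norm_num) (by linarith)
    nlinarith [sq_nonneg y]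
  -- sinh bound
  have hs2 : Real.sinh x ^ 2 ≥ 10 := by
    have he2 : Real.exp 2 ≥ 7.38 := by
      have h := Real.exp_one_gt_d9
      have : Real.exp 2 = Real.exp 1 * Real.exp 1 := by
        rw [← Real.exp_add]; norm_num
      nlinarith
    have hsinh2 : Real.sinh 2.1 ≥ 3.19 := by
      rw [Real.sinh_eq]
      have h1 : Real.exp 2.1 ≥ Real.exp 2 := Real.exp_le_exp.mpr (by norm_num)
      have h2 : Real.exp (-2.1) ≤ 1 := by
        rw [show (1:ℝ) = Real.exp 0 by simp]
        exact Real.exp_le_exp.mpr (by norm_num)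
      linarith
    rcases le_or_gt 0 x with hxp | hxn
    · have hxge : (2.1 : ℝ) ≤ x := by nlinarith
      have := Real.sinh_le_sinh.mpr hxge
      nlinarith
    · have hxle : x ≤ -2.1 := by nlinarith
      have h3 := Real.sinh_le_sinh.mpr hxle
      have h4 : Real.sinh (-2.1) = -Real.sinh 2.1 := Real.sinh_neg 2.1
      nlinarith
  -- cosh / sinh normSq formulas
  have hwxy : w = (x : ℂ) + (y : ℂ) * Complex.I := (Complex.re_add_im w).symm
  have hcosh : Complex.normSq (Complex.cosh w) =
      Real.cosh x ^ 2 * Real.cos y ^ 2 + Real.sinh x ^ 2 * Real.sin y ^ 2 := by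
    rw [hwxy, Complex.cosh_add, Complex.cosh_mul_I, Complex.sinh_mul_I,
      ← Complex.ofReal_cosh, ← Complex.ofReal_sinh, ← Complex.ofReal_cos,
      ← Complex.ofReal_sin, ← Complex.ofReal_mul, ← mul_assoc,
      ← Complex.ofReal_mul, Complex.normSq_add_mul_I]
    ring
  have hsinh : Complex.normSq (Complex.sinh w) =
      Real.sinh x ^ 2 * Real.cos y ^ 2 + Real.cosh x ^ 2 * Real.sin y ^ 2 := by
    rw [hwxy, Complex.sinh_add, Complex.cosh_mul_I, Complex.sinh_mul_I,
      ← Complex.ofReal_cosh, ← Complex.ofReal_sinh, ← Complex.ofReal_cos,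
      ← Complex.ofReal_sin, ← Complex.ofReal_mul, ← mul_assoc,
      ← Complex.ofReal_mul, Complex.normSq_add_mul_I]
    ring
  have hch2 : Real.cosh x ^ 2 = 1 + Real.sinh x ^ 2 := by
    nlinarith [Real.cosh_sq_sub_sinh_sq x]
  have hcs : Real.cos y ^ 2 + Real.sin y ^ 2 = 1 := by
    nlinarith [Real.sin_sq_add_cos_sq y]
  have hwne : w ≠ 0 := by
    intro h
    have hx0 : x = 0 := by simp [hx, h]
    rw [hx0] at hx2
    norm_num at hx2
  have hcoshne : Complex.cosh w ≠ 0 := by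
    intro h
    rw [h, map_zero] at hcosh
    nlinarith [sq_nonneg (Real.cosh x * Real.cos y), sq_nonneg (Real.sinh x * Real.sin y)]
  refine ⟨hwne, hcoshne, ?_⟩
  intro heq
  have heq2 : Complex.sinh w = (1 + δ) * Complex.cosh w * w := by
    rw [Complex.tanh_eq_sinh_div_cosh] at heq
    field_simp at heq
    linear_combination heq
  have hns : Complex.normSq (Complex.sinh w) =
      Complex.normSq (1 + δ) * Complex.normSq (Complex.cosh w) * Complex.normSq w := by
    rw [heq2, Complex.normSq_mul, Complex.normSq_mul]
  have hnw : Complex.normSq w = x ^ 2 + y ^ 2 := by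
    rw [Complex.normSq_apply]; ring
  rw [hsinh, hcosh, hnw] at hns
  set S := Real.sinh x ^ 2
  set C := Real.cos y ^ 2
  set Si := Real.sin y ^ 2
  have hC0 : 0 ≤ C := sq_nonneg _
  have hSi0 : 0 ≤ Si := sq_nonneg _
  have hSi1 : Si ≤ 1 := by linarith
  -- LHS = S*C + (1+S)*Si = S + Si ≤ S + 1
  -- RHS = N * ((1+S)C + S*Si) * (x²+y²) = N*(S + C)*(x²+y²) ≥ 0.3844*S*4.41
  have hrhs : Complex.normSq (1 + δ) * ((1 + S) * C + S * Si) * (x ^ 2 + y ^ 2) ≥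
      0.3844 * S * 4.41 := by
    have h1 : (1 + S) * C + S * Si ≥ S := by nlinarith
    have h2 : x ^ 2 + y ^ 2 ≥ 4.41 := by nlinarith [sq_nonneg y]
    have hS0 : (0:ℝ) ≤ S := sq_nonneg _
    have h3 : 0.3844 * S ≤ Complex.normSq (1 + δ) * ((1 + S) * C + S * Si) :=
      mul_le_mul hNlb h1 hS0 (le_of_lt hNpos)
    have h4 : 0.3844 * S * 4.41 ≤
        Complex.normSq (1 + δ) * ((1 + S) * C + S * Si) * (x ^ 2 + y ^ 2) :=
      mul_le_mul h3 h2 (by norm_num) (by positivity)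
    exact h4
  rw [hch2] at hns
  have hlhs : S * C + (1 + S) * Si = S + Si := by linear_combination S * hcs
  rw [hlhs] at hns
  linarith [hns, hrhs, hs2, hSi1]
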